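/- Let f, x : ℕ → ℂ be completely multiplicative functions in ℓ^2 with f ∗ x ∈ ℓ^2. Then ‖f ∗ x‖_2 ≤ ‖f‖_2 · ‖x‖_2 · |⟨f, x⟩|, since ‖f·x‖_2 ≥ |f(1)x(1)| = 1. -/
import Mathlib


open scoped ComplexConjugate
open Function

set_option maxHeartbeats 1000000

lemma ofReal_sq_norm_ne_zero {z : ℂ} (hz : z ≠ 0) : ((‖z‖ ^ 2 : ℝ) : ℂ) ≠ 0 := by
  intro h
  rw [Complex.ofReal_eq_zero] at h
  exact hz (norm_eq_zero.mp ((pow_eq_zero_iff two_ne_zero).mp h))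

/-- The coprime-pair kernel. -/
noncomputable def Kaux (φ : ℕ → ℂ) : ℕ × ℕ → ℂ :=
  fun q => if Nat.Coprime q.1 q.2 then φ q.1 * conj (φ q.2) else 0

lemma Kaux_ne_zero {φ : ℕ → ℂ} {q : ℕ × ℕ} (hq : Kaux φ q ≠ 0) :
    Nat.Coprime q.1 q.2 ∧ φ q.1 ≠ 0 ∧ φ q.2 ≠ 0 := by
  by_cases hc : Nat.Coprime q.1 q.2
  · rw [Kaux, if_pos hc] at hq
    refine ⟨hc, left_ne_zero_of_mul hq, fun h => ?_⟩
    rw [h] at hq; simp at hq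
  · rw [Kaux, if_neg hc] at hq; exact absurd rfl hq

lemma Kaux_norm_summable {φ : ℕ → ℂ} (hφ1 : Summable fun n => ‖φ n‖) :
    Summable fun q : ℕ × ℕ => ‖Kaux φ q‖ := by
  have hprod : Summable fun q : ℕ × ℕ => ‖φ q.1‖ * ‖φ q.2‖ := by
    have h1 : Summable fun n => ‖‖φ n‖‖ := by simpa using hφ1
    exact summable_mul_of_summable_norm h1 h1
  refine Summable.of_nonneg_of_le (fun q => norm_nonneg _) (fun q => ?_) hprod
  by_cases hc : Nat.Coprime q.1 q.2
  · rw [Kaux, if_pos hc, norm_mul, RCLike.norm_conj]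
  · rw [Kaux, if_neg hc, norm_zero]; positivity

/-- The two-variable regrouping: summing `φ(s')conj (φ(t'))` over all pairs equals
the `ℓ²` mass of `φ` times the coprime-pair sum. -/
lemma aux_pair (φ : ℕ → ℂ) (hφ0 : φ 0 = 0)
    (hφm : ∀ m n : ℕ, φ (m * n) = φ m * φ n)
    (hφ1 : Summable fun n => ‖φ n‖) (hφ2 : Summable fun n => ‖φ n‖ ^ 2) :
    ∑' q : ℕ × ℕ, φ q.1 * conj (φ q.2)
      = (∑' n : ℕ, ((‖φ n‖ ^ 2 : ℝ) : ℂ)) * ∑' q : ℕ × ℕ, Kaux φ q := by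
  have hnz : ∀ {n : ℕ}, φ n ≠ 0 → n ≠ 0 := fun h hn => h (by rw [hn, hφ0])
  set J : ℕ × ℕ × ℕ → ℂ := fun w => ((‖φ w.1‖ ^ 2 : ℝ) : ℂ) * Kaux φ w.2 with hJdef
  have hJsupp : ∀ w : ℕ × ℕ × ℕ, J w ≠ 0 →
      φ w.1 ≠ 0 ∧ Nat.Coprime w.2.1 w.2.2 ∧ φ w.2.1 ≠ 0 ∧ φ w.2.2 ≠ 0 := by
    intro w hw
    have h1 := left_ne_zero_of_mul hw
    have h2 := Kaux_ne_zero (right_ne_zero_of_mul hw)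
    refine ⟨?_, h2.1, h2.2.1, h2.2.2⟩
    intro h; rw [h] at h1; simp at h1
  have key : ∑' q : ℕ × ℕ, φ q.1 * conj (φ q.2) = ∑' w, J w := by
    refine tsum_eq_tsum_of_ne_zero_bij
      (fun w => (w.1.1 * w.1.2.1, w.1.1 * w.1.2.2)) ?_ ?_ ?_
    · rintro ⟨⟨g1, s1, t1⟩, hw1⟩ ⟨⟨g2, s2, t2⟩, hw2⟩ hEq
      obtain ⟨hg1, hco1, hs1, ht1⟩ := hJsupp _ hw1
      obtain ⟨hg2, hco2, hs2, ht2⟩ := hJsupp _ hw2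
      simp only [Prod.mk.injEq] at hEq
      obtain ⟨e1, e2⟩ := hEq
      have hg : g1 = g2 := by
        have c1 : Nat.gcd (g1 * s1) (g1 * t1) = g1 := by
          rw [Nat.gcd_mul_left, hco1, mul_one]
        have c2 : Nat.gcd (g2 * s2) (g2 * t2) = g2 := by
          rw [Nat.gcd_mul_left, hco2, mul_one]
        rw [← c1, e1, e2, c2]
      have hg1pos : 0 < g1 := Nat.pos_of_ne_zero (hnz hg1)
      subst hg
      have hs : s1 = s2 := Nat.eq_of_mul_eq_mul_left hg1pos e1
      have ht : t1 = t2 := Nat.eq_of_mul_eq_mul_left hg1pos e2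
      exact Subtype.ext (by simp [hs, ht])
    · rintro ⟨a, b⟩ hab
      rw [mem_support] at hab
      have ha : φ a ≠ 0 := left_ne_zero_of_mul hab
      have hb : φ b ≠ 0 := by
        intro h
        apply right_ne_zero_of_mul hab; rw [h]; simp
      have hgpos : 0 < Nat.gcd a b := Nat.gcd_pos_of_pos_left _ (Nat.pos_of_ne_zero (hnz ha))
      set g := Nat.gcd a b with hgdef
      have hsa : g * (a / g) = a := Nat.mul_div_cancel' (Nat.gcd_dvd_left a b)
      have htb : g * (b / g) = b := Nat.mul_div_cancel' (Nat.gcd_dvd_right a b)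
      have hco : Nat.Coprime (a / g) (b / g) := Nat.coprime_div_gcd_div_gcd hgpos
      have hφa : φ g * φ (a / g) ≠ 0 := by rw [← hφm, hsa]; exact ha
      have hφb : φ g * φ (b / g) ≠ 0 := by rw [← hφm, htb]; exact hb
      have hmem : J (g, (a / g, b / g)) ≠ 0 := by
        apply mul_ne_zero
        · exact ofReal_sq_norm_ne_zero (left_ne_zero_of_mul hφa)
        · rw [Kaux, if_pos hco]
          exact mul_ne_zero (right_ne_zero_of_mul hφa)
            (by simpa using (right_ne_zero_of_mul hφb))
      exact ⟨⟨(g, (a / g, b / g)), hmem⟩, by simp [hsa, htb]⟩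
    · rintro ⟨⟨g, s, t⟩, hw⟩
      obtain ⟨hg, hco, hs, ht⟩ := hJsupp _ hw
      show φ (g * s) * conj (φ (g * t)) = J (g, (s, t))
      rw [hJdef]
      simp only [Kaux, if_pos hco, hφm, map_mul]
      rw [Complex.ofReal_pow, ← Complex.mul_conj']
      ring
  rw [key]
  have h1 : Summable fun n => ‖((‖φ n‖ ^ 2 : ℝ) : ℂ)‖ := by
    simpa [Real.norm_eq_abs, abs_pow, abs_norm] using hφ2
  exact (tsum_mul_tsum_of_summable_norm h1 (Kaux_norm_summable hφ1)).symm

/-- The four-variable regrouping. -/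
lemma aux_quad (f x : ℕ → ℂ) (hf0 : f 0 = 0) (hx0 : x 0 = 0)
    (hfm : ∀ m n : ℕ, f (m * n) = f m * f n)
    (hxm : ∀ m n : ℕ, x (m * n) = x m * x n)
    (hf2 : Summable fun n => ‖f n‖ ^ 2) (hx2 : Summable fun n => ‖x n‖ ^ 2)
    (hφ1 : Summable fun n => ‖f n * conj (x n)‖) :
    HasSum (fun z : (ℕ × ℕ) × ℕ × ℕ =>
        if z.1.1 * z.1.2 = z.2.1 * z.2.2 then (f z.1.1 * x z.1.2) * conj (f z.2.1 * x z.2.2)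
        else 0)
      ((∑' n : ℕ, ((‖f n‖ ^ 2 : ℝ) : ℂ)) * (∑' n : ℕ, ((‖x n‖ ^ 2 : ℝ) : ℂ)) *
        ∑' q : ℕ × ℕ, Kaux (fun n => f n * conj (x n)) q) := by
  set φ : ℕ → ℂ := fun n => f n * conj (x n) with hφdef
  have hfnz : ∀ {n : ℕ}, f n ≠ 0 → n ≠ 0 := fun h hn => h (by rw [hn, hf0])
  have hxnz : ∀ {n : ℕ}, x n ≠ 0 → n ≠ 0 := fun h hn => h (by rw [hn, hx0])
  set Φ : ℕ × ℕ → ℂ := fun p => ((‖f p.1‖ ^ 2 : ℝ) : ℂ) * ((‖x p.2‖ ^ 2 : ℝ) : ℂ) with hΦdef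
  set G : (ℕ × ℕ) × ℕ × ℕ → ℂ := fun w => Φ w.1 * Kaux φ w.2 with hGdef
  have hf2' : Summable fun n => ‖((‖f n‖ ^ 2 : ℝ) : ℂ)‖ := by
    simpa [Real.norm_eq_abs, abs_pow, abs_norm] using hf2
  have hx2' : Summable fun n => ‖((‖x n‖ ^ 2 : ℝ) : ℂ)‖ := by
    simpa [Real.norm_eq_abs, abs_pow, abs_norm] using hx2
  have hΦnorm : Summable fun p : ℕ × ℕ => ‖Φ p‖ := by
    have := summable_mul_of_summable_norm (R := ℂ) hf2' hx2'
    have h2 : Summable fun p : ℕ × ℕ =>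
        ‖((‖f p.1‖ ^ 2 : ℝ) : ℂ)‖ * ‖((‖x p.2‖ ^ 2 : ℝ) : ℂ)‖ := by
      have h1 : Summable fun n => ‖‖((‖f n‖ ^ 2 : ℝ) : ℂ)‖‖ := by simpa using hf2'
      have h1' : Summable fun n => ‖‖((‖x n‖ ^ 2 : ℝ) : ℂ)‖‖ := by simpa using hx2'
      exact summable_mul_of_summable_norm h1 h1'
    refine h2.congr fun p => ?_
    rw [hΦdef]; simp [norm_mul]
  have hKnorm := Kaux_norm_summable (φ := φ) hφ1
  have hGsum : Summable G := summable_mul_of_summable_norm hΦnorm hKnorm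
  have hGtsum : ∑' w, G w
      = ((∑' n : ℕ, ((‖f n‖ ^ 2 : ℝ) : ℂ)) * (∑' n : ℕ, ((‖x n‖ ^ 2 : ℝ) : ℂ))) *
        ∑' q : ℕ × ℕ, Kaux φ q := by
    rw [hGdef, ← tsum_mul_tsum_of_summable_norm hΦnorm hKnorm]
    congr 1
    rw [hΦdef, ← tsum_mul_tsum_of_summable_norm hf2' hx2']
  have hGhas : HasSum G
      ((∑' n : ℕ, ((‖f n‖ ^ 2 : ℝ) : ℂ)) * (∑' n : ℕ, ((‖x n‖ ^ 2 : ℝ) : ℂ)) *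
        ∑' q : ℕ × ℕ, Kaux φ q) := by
    exact hGtsum ▸ hGsum.hasSum
  -- transfer along the bijection
  have hGsupp : ∀ w : (ℕ × ℕ) × ℕ × ℕ, G w ≠ 0 →
      f w.1.1 ≠ 0 ∧ x w.1.2 ≠ 0 ∧ Nat.Coprime w.2.1 w.2.2 ∧
        f w.2.1 ≠ 0 ∧ conj (x w.2.1) ≠ 0 ∧ f w.2.2 ≠ 0 ∧ conj (x w.2.2) ≠ 0 := by
    intro w hw
    have h1 := left_ne_zero_of_mul hw
    have h2 := Kaux_ne_zero (right_ne_zero_of_mul hw)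
    rw [hΦdef] at h1
    have hfg : f w.1.1 ≠ 0 := by
      intro h; apply left_ne_zero_of_mul h1; rw [h]; simp
    have hxu : x w.1.2 ≠ 0 := by
      intro h; apply right_ne_zero_of_mul h1; rw [h]; simp
    have hs := h2.2.1
    have ht := h2.2.2
    rw [hφdef] at hs ht
    exact ⟨hfg, hxu, h2.1, left_ne_zero_of_mul hs, right_ne_zero_of_mul hs,
      left_ne_zero_of_mul ht, right_ne_zero_of_mul ht⟩
  refine (hasSum_iff_hasSum_of_ne_zero_bij
    (fun w => ((w.1.1.1 * w.1.2.1, w.1.2.2 * w.1.1.2), (w.1.1.1 * w.1.2.2, w.1.2.1 * w.1.1.2)))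
    ?_ ?_ ?_).mpr hGhas
  · rintro ⟨⟨⟨g1, u1⟩, s1, t1⟩, hw1⟩ ⟨⟨⟨g2, u2⟩, s2, t2⟩, hw2⟩ hEq
    obtain ⟨hfg1, hxu1, hco1, hfs1, hxs1, hft1, hxt1⟩ := hGsupp _ hw1
    obtain ⟨hfg2, hxu2, hco2, hfs2, hxs2, hft2, hxt2⟩ := hGsupp _ hw2
    simp only [Prod.mk.injEq] at hEq
    obtain ⟨⟨e1, e2⟩, e3, e4⟩ := hEq
    have hg : g1 = g2 := by
      have c1 : Nat.gcd (g1 * s1) (g1 * t1) = g1 := by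
        rw [Nat.gcd_mul_left, hco1, mul_one]
      have c2 : Nat.gcd (g2 * s2) (g2 * t2) = g2 := by
        rw [Nat.gcd_mul_left, hco2, mul_one]
      rw [← c1, e1, e3, c2]
    have hg1pos : 0 < g1 := Nat.pos_of_ne_zero (hfnz hfg1)
    subst hg
    have hs : s1 = s2 := Nat.eq_of_mul_eq_mul_left hg1pos e1
    have ht : t1 = t2 := Nat.eq_of_mul_eq_mul_left hg1pos e3
    have ht1pos : 0 < t1 := by
      have : x t1 ≠ 0 := by simpa using hxt1
      exact Nat.pos_of_ne_zero (hxnz this)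
    subst ht
    have hu : u1 = u2 := Nat.eq_of_mul_eq_mul_left ht1pos e2
    exact Subtype.ext (by simp [hs, hu])
  · rintro ⟨⟨a, b⟩, c, d⟩ hz
    rw [mem_support] at hz
    have hcond : a * b = c * d := by
      by_contra h; rw [if_neg h] at hz; exact hz rfl
    rw [if_pos hcond] at hz
    have h1 := left_ne_zero_of_mul hz
    have h2 := right_ne_zero_of_mul hz
    have hfa : f a ≠ 0 := left_ne_zero_of_mul h1
    have hxb : x b ≠ 0 := right_ne_zero_of_mul h1
    have hfc : f c ≠ 0 := by
      intro h; apply h2; rw [map_mul, h]; simp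
    have hxd : x d ≠ 0 := by
      intro h; apply h2; rw [map_mul, h]; simp
    have hapos : 0 < a := Nat.pos_of_ne_zero (hfnz hfa)
    have hgpos : 0 < Nat.gcd a c := Nat.gcd_pos_of_pos_left _ hapos
    set g := Nat.gcd a c with hgdef
    set s := a / g with hsdef
    set t := c / g with htdef
    have hsa : g * s = a := Nat.mul_div_cancel' (Nat.gcd_dvd_left a c)
    have htc : g * t = c := Nat.mul_div_cancel' (Nat.gcd_dvd_right a c)
    have hco : Nat.Coprime s t := Nat.coprime_div_gcd_div_gcd hgpos
    have hsb : s * b = t * d := by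
      apply Nat.eq_of_mul_eq_mul_left hgpos
      rw [← mul_assoc, ← mul_assoc, hsa, htc, hcond]
    have htdvd : t ∣ b := by
      refine (Nat.Coprime.dvd_of_dvd_mul_left hco.symm ?_)
      exact ⟨d, hsb⟩
    obtain ⟨u, hbu⟩ := htdvd
    have htpos : 0 < t := by
      have : f c ≠ 0 := hfc
      have : f g * f t ≠ 0 := by rw [← hfm, htc]; exact hfc
      exact Nat.pos_of_ne_zero (hfnz (right_ne_zero_of_mul this))
    have hdu : d = s * u := by
      apply Nat.eq_of_mul_eq_mul_left htpos
      rw [← hsb, hbu]; ring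
    -- values at components
    have hfga : f g * f s ≠ 0 := by rw [← hfm, hsa]; exact hfa
    have hfgc : f g * f t ≠ 0 := by rw [← hfm, htc]; exact hfc
    have hxtu : x t * x u ≠ 0 := by rw [← hxm, ← hbu]; exact hxb
    have hxsu : x s * x u ≠ 0 := by rw [← hxm, ← hdu]; exact hxd
    have hmem : G ((g, u), (s, t)) ≠ 0 := by
      apply mul_ne_zero
      · rw [hΦdef]
        exact mul_ne_zero (ofReal_sq_norm_ne_zero (left_ne_zero_of_mul hfga))
          (ofReal_sq_norm_ne_zero (right_ne_zero_of_mul hxtu))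
      · rw [Kaux, if_pos hco]
        apply mul_ne_zero
        · rw [hφdef]
          exact mul_ne_zero (right_ne_zero_of_mul hfga)
            (by simpa using left_ne_zero_of_mul hxsu)
        · rw [hφdef]
          simp only [map_mul, ne_eq]
          exact mul_ne_zero (by simpa using right_ne_zero_of_mul hfgc)
            (by simpa using left_ne_zero_of_mul hxtu)
    refine ⟨⟨((g, u), (s, t)), hmem⟩, ?_⟩
    simp only [Prod.mk.injEq]
    refine ⟨⟨hsa, ?_⟩, htc, hdu.symm⟩
    rw [hbu]
  · rintro ⟨⟨⟨g, u⟩, s, t⟩, hw⟩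
    obtain ⟨hfg, hxu, hco, hfs, hxs, hft, hxt⟩ := hGsupp _ hw
    show (if (g * s) * (t * u) = (g * t) * (s * u) then
        (f (g * s) * x (t * u)) * conj (f (g * t) * x (s * u)) else 0) = G ((g, u), (s, t))
    rw [if_pos (by ring)]
    rw [hGdef, hΦdef]
    simp only [Kaux, if_pos hco, hφdef, hfm, hxm, map_mul]
    rw [Complex.ofReal_pow, Complex.ofReal_pow, ← Complex.mul_conj' (f g),
      ← Complex.mul_conj' (x u)]
    ring_nf
    rw [Complex.conj_conj]
    ring

/-- For completely multiplicative f, x ∈ ℓ² with f∗x ∈ ℓ²: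
‖f ∗ x‖₂ ≤ ‖f‖₂ · ‖x‖₂ · |⟨f, x⟩|. -/
theorem norm_conv_le_of_completelyMultiplicative
    (f x : ℕ → ℂ)
    (hf0 : f 0 = 0) (hx0 : x 0 = 0)
    (hf1 : f 1 = 1) (hx1 : x 1 = 1)
    (hfm : ∀ m n : ℕ, 0 < m → 0 < n → f (m * n) = f m * f n)
    (hxm : ∀ m n : ℕ, 0 < m → 0 < n → x (m * n) = x m * x n)
    (hf2 : Summable fun n => ‖f n‖ ^ 2) (hx2 : Summable fun n => ‖x n‖ ^ 2)
    (hfx2 : Summable fun n => ‖∑ d ∈ n.divisors, f d * x (n / d)‖ ^ 2) :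
    (∑' n : ℕ, ‖∑ d ∈ n.divisors, f d * x (n / d)‖ ^ 2) ^ ((1 : ℝ) / 2) ≤
      (∑' n : ℕ, ‖f n‖ ^ 2) ^ ((1 : ℝ) / 2) *
        (∑' n : ℕ, ‖x n‖ ^ 2) ^ ((1 : ℝ) / 2) *
        ‖∑' n : ℕ, f n * conj (x n)‖ := by
  -- full multiplicativity
  have hfm' : ∀ m n : ℕ, f (m * n) = f m * f n := by
    intro m n
    rcases Nat.eq_zero_or_pos m with hm | hm
    · subst hm; simp [hf0]
    rcases Nat.eq_zero_or_pos n with hn | hn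
    · subst hn; simp [hf0]
    exact hfm m n hm hn
  have hxm' : ∀ m n : ℕ, x (m * n) = x m * x n := by
    intro m n
    rcases Nat.eq_zero_or_pos m with hm | hm
    · subst hm; simp [hx0]
    rcases Nat.eq_zero_or_pos n with hn | hn
    · subst hn; simp [hx0]
    exact hxm m n hm hn
  set φ : ℕ → ℂ := fun n => f n * conj (x n) with hφdef
  have hφ0 : φ 0 = 0 := by simp [hφdef, hf0]
  have hφone : φ 1 = 1 := by simp [hφdef, hf1, hx1]
  have hφm : ∀ m n : ℕ, φ (m * n) = φ m * φ n := by
    intro m n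
    simp only [hφdef, hfm', hxm', map_mul]
    ring
  have hφnorm : ∀ n, ‖φ n‖ = ‖f n‖ * ‖x n‖ := by
    intro n; rw [hφdef]; simp [norm_mul, RCLike.norm_conj]
  -- summability facts
  have hφ1sum : Summable fun n => ‖φ n‖ := by
    refine Summable.of_nonneg_of_le (fun n => norm_nonneg _) (fun n => ?_)
      ((hf2.add hx2).div_const 2)
    rw [hφnorm]
    nlinarith [sq_nonneg (‖f n‖ - ‖x n‖), norm_nonneg (f n), norm_nonneg (x n)]
  have hX : ∀ n, ‖x n‖ ^ 2 ≤ ∑' m, ‖x m‖ ^ 2 := fun n =>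
    Summable.le_tsum hx2 n fun j _ => sq_nonneg _
  have hφ2sum : Summable fun n => ‖φ n‖ ^ 2 := by
    refine Summable.of_nonneg_of_le (fun n => sq_nonneg _) (fun n => ?_)
      (hf2.mul_right (∑' m, ‖x m‖ ^ 2))
    rw [hφnorm, mul_pow]
    exact mul_le_mul_of_nonneg_left (hX n) (sq_nonneg _)
  have hφsum : Summable φ := hφ1sum.of_norm
  -- notations
  set gg : ℕ → ℂ := fun n => ∑ p ∈ n.divisorsAntidiagonal, f p.1 * x p.2 with hggdef
  have hggeq : ∀ n : ℕ, (∑ d ∈ n.divisors, f d * x (n / d)) = gg n := fun n =>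
    (Nat.sum_divisorsAntidiagonal fun i j => f i * x j).symm
  set A : ℝ := ∑' n : ℕ, ‖∑ d ∈ n.divisors, f d * x (n / d)‖ ^ 2 with hAdef
  set F : ℝ := ∑' n : ℕ, ‖f n‖ ^ 2 with hFdef
  set X : ℝ := ∑' n : ℕ, ‖x n‖ ^ 2 with hXdef
  set H : ℝ := ∑' n : ℕ, ‖φ n‖ ^ 2 with hHdef
  set I : ℂ := ∑' n : ℕ, φ n with hIdef
  set S : ℂ := ∑' q : ℕ × ℕ, Kaux φ q with hSdef
  -- the quadruple sum
  have hW := aux_quad f x hf0 hx0 hfm' hxm' hf2 hx2 hφ1sum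
  set W : (ℕ × ℕ) × ℕ × ℕ → ℂ := fun z =>
    if z.1.1 * z.1.2 = z.2.1 * z.2.2 then (f z.1.1 * x z.1.2) * conj (f z.2.1 * x z.2.2)
    else 0 with hWdef
  set π : (ℕ × ℕ) × ℕ × ℕ → ℕ := fun z => z.1.1 * z.1.2 with hπdef
  -- fiberwise computation
  have hfiber : ∀ n : ℕ, ∑' (z : π ⁻¹' {n}), W z = gg n * conj (gg n) := by
    intro n
    rw [tsum_subtype]
    rw [tsum_eq_sum (s := n.divisorsAntidiagonal ×ˢ n.divisorsAntidiagonal) ?van]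
    case van =>
      intro z hz
      by_cases hzin : z ∈ π ⁻¹' {n}
      · rw [Set.indicator_of_mem hzin]
        have hn : z.1.1 * z.1.2 = n := hzin
        by_cases hcond : z.1.1 * z.1.2 = z.2.1 * z.2.2
        · by_cases hn0 : n = 0
          · subst hn0
            rw [hWdef]
            simp only [if_pos hcond]
            rcases Nat.mul_eq_zero.mp hn with h | h <;> simp [h, hf0, hx0]
          · exfalso
            apply hz
            rw [Finset.mem_product]
            constructor
            · exact Nat.mem_divisorsAntidiagonal.mpr ⟨hn, hn0⟩
            · exact Nat.mem_divisorsAntidiagonal.mpr ⟨by rw [← hcond, hn], hn0⟩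
        · rw [hWdef]; simp [hcond]
      · rw [Set.indicator_of_notMem hzin]
    rw [hggdef]
    have hconj : conj (∑ p ∈ n.divisorsAntidiagonal, f p.1 * x p.2)
        = ∑ q ∈ n.divisorsAntidiagonal, conj (f q.1 * x q.2) := by
      exact map_sum (starRingEnd ℂ) _ _
    rw [hconj, Finset.sum_mul_sum, Finset.sum_product]
    refine Finset.sum_congr rfl fun p hp => Finset.sum_congr rfl fun q hq => ?_
    have hpn : p.1 * p.2 = n := (Nat.mem_divisorsAntidiagonal.mp hp).1
    have hqn : q.1 * q.2 = n := (Nat.mem_divisorsAntidiagonal.mp hq).1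
    have hin : (p, q) ∈ π ⁻¹' {n} := by
      simp only [Set.mem_preimage, Set.mem_singleton_iff, hπdef]; exact hpn
    rw [Set.indicator_of_mem hin, hWdef]
    simp only [if_pos (hpn.trans hqn.symm)]
  -- main complex identity for A
  have hAc : ((A : ℝ) : ℂ) = ((F : ℝ) : ℂ) * ((X : ℝ) : ℂ) * S := by
    have h1 : ((A : ℝ) : ℂ) = ∑' n : ℕ, ((‖gg n‖ ^ 2 : ℝ) : ℂ) := by
      rw [hAdef, Complex.ofReal_tsum]
      exact tsum_congr fun n => by rw [hggeq]
    have h2 : ∀ n : ℕ, ((‖gg n‖ ^ 2 : ℝ) : ℂ) = gg n * conj (gg n) := fun n => by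
      rw [Complex.mul_conj', Complex.ofReal_pow]
    have h3 := (hW.tsum_fiberwise π).tsum_eq
    rw [h1, tsum_congr h2, tsum_congr fun n => (hfiber n).symm]
    rw [h3]
    rw [hFdef, hXdef, hSdef, Complex.ofReal_tsum, Complex.ofReal_tsum]
  -- the inner-product identity
  have hIc : I * conj I = ((H : ℝ) : ℂ) * S := by
    have hconjI : conj I = ∑' n, conj (φ n) := by
      rw [hIdef]
      simp only [starRingEnd_apply]
      exact tsum_star
    have hpair : I * conj I = ∑' q : ℕ × ℕ, φ q.1 * conj (φ q.2) := by
      rw [hconjI, hIdef]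
      exact tsum_mul_tsum_of_summable_norm hφ1sum (by simpa [RCLike.norm_conj] using hφ1sum)
    rw [hpair, aux_pair φ hφ0 hφm hφ1sum hφ2sum, hHdef, hSdef, Complex.ofReal_tsum]
  -- real identity
  have hkey : A * H = F * X * ‖I‖ ^ 2 := by
    have : ((A * H : ℝ) : ℂ) = ((F * X * ‖I‖ ^ 2 : ℝ) : ℂ) := by
      push_cast
      rw [hAc]
      have : ((‖I‖ : ℝ) : ℂ) ^ 2 = I * conj I := (Complex.mul_conj' I).symm
      rw [this, hIc]
      ring
    exact_mod_cast this
  -- H ≥ 1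
  have hH1 : (1 : ℝ) ≤ H := by
    have := Summable.le_tsum hφ2sum 1 fun j _ => sq_nonneg _
    simpa [hφone] using this
  have hA0 : 0 ≤ A := tsum_nonneg fun n => sq_nonneg _
  have hF0 : 0 ≤ F := tsum_nonneg fun n => sq_nonneg _
  have hX0 : 0 ≤ X := tsum_nonneg fun n => sq_nonneg _
  have hAle : A ≤ F * X * ‖I‖ ^ 2 := by
    calc A = A * 1 := (mul_one A).symm
      _ ≤ A * H := by exact mul_le_mul_of_nonneg_left hH1 hA0
      _ = F * X * ‖I‖ ^ 2 := hkey
  have hfinal : F ^ ((1 : ℝ) / 2) * X ^ ((1 : ℝ) / 2) * ‖I‖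
      = (F * X * ‖I‖ ^ 2) ^ ((1 : ℝ) / 2) := by
    rw [Real.mul_rpow (by positivity) (by positivity), Real.mul_rpow hF0 hX0]
    congr 1
    rw [← Real.rpow_natCast ‖I‖ 2, ← Real.rpow_mul (norm_nonneg _)]
    norm_num
  rw [hfinal]
  exact Real.rpow_le_rpow hA0 hAle (by norm_num)
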